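/- Let Q1 ∈ M_{k_1}(ℝ) and Q2 ∈ M_{k_2}(ℝ) with k_1 + k_2 = k be diagonal matrices with positive diagonal entries arranged in descending order, and let Φ : M_2(ℂ) → M_{r,s}(ℂ) be a nonzero linear map preserving disjointness. Suppose that for each (i,j) ∈ {(1,1), (2,1), (2,2)}, Φ(E_{ij}) equals the r×s block-diagonal matrix diag(E_{ij} ⊗ Q1, E_{ji} ⊗ Q2, 0) (with a zero block of size (r−2k)×(s−2k)). Then Φ(E_{12}) = diag(E_{12} ⊗ Q1, E_{21} ⊗ Q2, 0) as well. -/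

import Mathlib

open Matrix Kronecker

namespace Paper

/-- Two rectangular complex matrices are disjoint if `Aᴴ * B = 0` and `A * Bᴴ = 0`. -/
def MDisjoint {m n : ℕ} (A B : Matrix (Fin m) (Fin n) ℂ) : Prop :=
  Aᴴ * B = 0 ∧ A * Bᴴ = 0

/-- The block diagonal matrix `diag(A ⊗ Q1, Aᵗ ⊗ Q2, 0)`. -/
def stdBlocks {m n q1 q2 t1 t2 : ℕ}
    (Q1 : Fin q1 → ℝ) (Q2 : Fin q2 → ℝ) (A : Matrix (Fin m) (Fin n) ℂ) :
    Matrix ((Fin m × Fin q1) ⊕ ((Fin n × Fin q2) ⊕ Fin t1))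
           ((Fin n × Fin q1) ⊕ ((Fin m × Fin q2) ⊕ Fin t2)) ℂ :=
  Matrix.fromBlocks (A ⊗ₖ Matrix.diagonal fun i => (Q1 i : ℂ)) 0 0
    (Matrix.fromBlocks (Aᵀ ⊗ₖ Matrix.diagonal fun i => (Q2 i : ℂ)) 0 0 0)

/-- A linear map `Φ : M_{m,n}(ℂ) → M_{r,s}(ℂ)` is in standard form. -/
def IsStandardForm {m n r s : ℕ}
    (Φ : Matrix (Fin m) (Fin n) ℂ →ₗ[ℂ] Matrix (Fin r) (Fin s) ℂ) : Prop :=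
  ∃ (q1 q2 : ℕ) (Q1 : Fin q1 → ℝ) (Q2 : Fin q2 → ℝ)
    (U : Matrix (Fin r) (Fin r) ℂ) (V : Matrix (Fin s) (Fin s) ℂ)
    (er : (Fin m × Fin q1) ⊕ ((Fin n × Fin q2) ⊕ Fin (r - (m * q1 + n * q2))) ≃ Fin r)
    (es : (Fin n × Fin q1) ⊕ ((Fin m × Fin q2) ⊕ Fin (s - (n * q1 + m * q2))) ≃ Fin s),
    m * q1 + n * q2 ≤ r ∧ n * q1 + m * q2 ≤ s ∧
    (∀ i, 0 < Q1 i) ∧ (∀ i, 0 < Q2 i) ∧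
    U ∈ Matrix.unitaryGroup (Fin r) ℂ ∧ V ∈ Matrix.unitaryGroup (Fin s) ℂ ∧
    ∀ A, Φ A = U * (Matrix.reindex er es (stdBlocks Q1 Q2 A)) * V

section Aux

variable {k1 k2 t1 t2 m n : ℕ} (Q1 : Fin k1 → ℝ) (Q2 : Fin k2 → ℝ)

lemma kronecker_conjT {l m n p : Type*} (A : Matrix l m ℂ) (B : Matrix n p ℂ) :
    (A ⊗ₖ B)ᴴ = Aᴴ ⊗ₖ Bᴴ := by
  ext ⟨i, j⟩ ⟨k, l⟩
  simp [Matrix.conjTranspose_apply, Matrix.kroneckerMap_apply, mul_comm]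

lemma stdBlocks_conjT_mul (A B : Matrix (Fin m) (Fin n) ℂ)
    (h1 : Aᴴ * B = 0) (h2 : A * Bᴴ = 0) :
    (stdBlocks Q1 Q2 A (t1 := t1) (t2 := t2))ᴴ * stdBlocks Q1 Q2 B (t1 := t1) (t2 := t2) = 0 := by
  have h3 : (Aᵀ)ᴴ * Bᵀ = 0 := by
    ext i j
    have h := congrFun (congrFun h2 i) j
    simp only [Matrix.mul_apply, Matrix.conjTranspose_apply, Matrix.transpose_apply,
      Matrix.zero_apply] at h ⊢
    have h' := congrArg star h
    simpa [star_sum, mul_comm] using h'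
  unfold stdBlocks
  rw [Matrix.fromBlocks_conjTranspose, Matrix.fromBlocks_conjTranspose,
    Matrix.fromBlocks_multiply, Matrix.fromBlocks_multiply,
    kronecker_conjT, kronecker_conjT, ← Matrix.mul_kronecker_mul, ← Matrix.mul_kronecker_mul,
    h1, h3]
  simp

lemma stdBlocks_add (A B : Matrix (Fin m) (Fin n) ℂ) :
    stdBlocks Q1 Q2 (A + B) (t1 := t1) (t2 := t2)
      = stdBlocks Q1 Q2 A + stdBlocks Q1 Q2 B := by
  ext (⟨i,a⟩ | (⟨i,a⟩ | i)) (⟨j,b⟩ | (⟨j,b⟩ | j)) <;>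
    simp [stdBlocks, Matrix.fromBlocks, Matrix.add_kronecker, Matrix.transpose_add]

lemma stdBlocks_sub (A B : Matrix (Fin m) (Fin n) ℂ) :
    stdBlocks Q1 Q2 (A - B) (t1 := t1) (t2 := t2)
      = stdBlocks Q1 Q2 A - stdBlocks Q1 Q2 B := by
  ext (⟨i,a⟩ | (⟨i,a⟩ | i)) (⟨j,b⟩ | (⟨j,b⟩ | j)) <;>
    simp [stdBlocks, Matrix.fromBlocks, Matrix.transpose_sub, Matrix.sub_apply, sub_mul]

/-- The right factor in the factorization `stdBlocks A = stdBlocks 1 * gBlocks A`. -/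
def gBlocks {m q1 q2 t : ℕ} (A : Matrix (Fin m) (Fin m) ℂ) :
    Matrix ((Fin m × Fin q1) ⊕ ((Fin m × Fin q2) ⊕ Fin t))
           ((Fin m × Fin q1) ⊕ ((Fin m × Fin q2) ⊕ Fin t)) ℂ :=
  Matrix.fromBlocks (A ⊗ₖ (1 : Matrix (Fin q1) (Fin q1) ℂ)) 0 0
    (Matrix.fromBlocks (Aᵀ ⊗ₖ (1 : Matrix (Fin q2) (Fin q2) ℂ)) 0 0 0)

lemma stdBlocks_factor (A : Matrix (Fin m) (Fin m) ℂ) :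
    stdBlocks Q1 Q2 A (t1 := t1) (t2 := t2)
      = stdBlocks (m := m) (n := m) (t1 := t1) (t2 := t2) Q1 Q2 1 * gBlocks (q1 := k1) (q2 := k2) (t := t2) A := by
  unfold stdBlocks gBlocks
  rw [Matrix.fromBlocks_multiply, Matrix.fromBlocks_multiply,
    ← Matrix.mul_kronecker_mul, ← Matrix.mul_kronecker_mul]
  simp

open ComplexOrder in
lemma conjT_mul_self_zero {r s : ℕ} (A : Matrix (Fin r) (Fin s) ℂ) (h : Aᴴ * A = 0) :
    A = 0 :=
  Matrix.conjTranspose_mul_self_eq_zero.mp h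

end Aux

/-- if `Φ(E_{ij}) = diag(E_{ij} ⊗ Q1, E_{ji} ⊗ Q2, 0)` for
`(i,j) ∈ {(1,1), (2,1), (2,2)}`, then the same form holds for `(1,2)`. -/
theorem lemma3b_fourth_corner
    {r s k1 k2 : ℕ}
    (Q1 : Fin k1 → ℝ) (Q2 : Fin k2 → ℝ)
    (hQ1pos : ∀ i, 0 < Q1 i) (hQ2pos : ∀ i, 0 < Q2 i)
    (hQ1dec : Antitone Q1) (hQ2dec : Antitone Q2)
    (hkr : 2 * (k1 + k2) ≤ r) (hks : 2 * (k1 + k2) ≤ s)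
    (er : (Fin 2 × Fin k1) ⊕ ((Fin 2 × Fin k2) ⊕ Fin (r - 2 * (k1 + k2))) ≃ Fin r)
    (es : (Fin 2 × Fin k1) ⊕ ((Fin 2 × Fin k2) ⊕ Fin (s - 2 * (k1 + k2))) ≃ Fin s)
    (Φ : Matrix (Fin 2) (Fin 2) ℂ →ₗ[ℂ] Matrix (Fin r) (Fin s) ℂ)
    (hΦ : Φ ≠ 0)
    (hdisj : ∀ A B : Matrix (Fin 2) (Fin 2) ℂ, MDisjoint A B → MDisjoint (Φ A) (Φ B))
    (hform : ∀ i j : Fin 2, (i, j) = (0, 0) ∨ (i, j) = (1, 0) ∨ (i, j) = (1, 1) →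
      Φ (Matrix.single i j 1) =
        Matrix.reindex er es (stdBlocks Q1 Q2 (Matrix.single i j 1))) :
    Φ (Matrix.single 0 1 1) =
      Matrix.reindex er es (stdBlocks Q1 Q2 (Matrix.single 0 1 1)) := by
  -- notation
  set E : Fin 2 → Fin 2 → Matrix (Fin 2) (Fin 2) ℂ :=
    fun i j => Matrix.single i j 1 with hE
  set F : Matrix (Fin 2) (Fin 2) ℂ → Matrix (Fin r) (Fin s) ℂ :=
    fun A => Matrix.reindex er es (stdBlocks Q1 Q2 A) with hFdef
  have h00 : Φ (E 0 0) = F (E 0 0) := hform 0 0 (Or.inl rfl)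
  have h10 : Φ (E 1 0) = F (E 1 0) := hform 1 0 (Or.inr (Or.inl rfl))
  have h11 : Φ (E 1 1) = F (E 1 1) := hform 1 1 (Or.inr (Or.inr rfl))
  -- F is additive / subtractive
  have Fadd : ∀ A B, F (A + B) = F A + F B := by
    intro A B
    simp [hFdef, Matrix.reindex_apply, stdBlocks_add, Matrix.submatrix_add]
  have Fsub : ∀ A B, F (A - B) = F A - F B := by
    intro A B
    simp [hFdef, Matrix.reindex_apply, stdBlocks_sub, Matrix.submatrix_sub]
  -- disjointness on the model side
  have Fdisj : ∀ A B, MDisjoint A B → (F A)ᴴ * F B = 0 := by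
    intro A B hAB
    simp only [hFdef, Matrix.reindex_apply, Matrix.conjTranspose_submatrix]
    rw [Matrix.submatrix_mul_equiv, stdBlocks_conjT_mul Q1 Q2 A B hAB.1 hAB.2]
    simp
  -- factorization on the reindexed side
  have Ffac : ∀ A, F A = F 1 * Matrix.reindex es es
      (gBlocks (q1 := k1) (q2 := k2) (t := s - 2 * (k1 + k2)) A) := by
    intro A
    simp only [hFdef, Matrix.reindex_apply]
    rw [Matrix.submatrix_mul_equiv, ← stdBlocks_factor]
  -- disjointness computations in M₂(ℂ)
  have hdcomp : ∀ A B : Matrix (Fin 2) (Fin 2) ℂ,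
      (∀ i j, (Aᴴ * B) i j = 0) → (∀ i j, (A * Bᴴ) i j = 0) → MDisjoint A B := by
    intro A B h1 h2
    exact ⟨by ext i j; simpa using h1 i j, by ext i j; simpa using h2 i j⟩
  have d1 : MDisjoint (E 0 1) (E 1 0) := by
    refine hdcomp _ _ ?_ ?_ <;> intro i j <;> fin_cases i <;> fin_cases j <;>
      simp [hE, Matrix.mul_apply, Fin.sum_univ_two, Matrix.single,
        Matrix.conjTranspose_apply]
  have d2 : MDisjoint (E 0 0 + E 0 1) (E 1 0 - E 1 1) := by
    refine hdcomp _ _ ?_ ?_ <;> intro i j <;> fin_cases i <;> fin_cases j <;>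
      simp [hE, Matrix.mul_apply, Fin.sum_univ_two, Matrix.single,
        Matrix.conjTranspose_apply]
  have d3 : MDisjoint (E 0 1 + E 1 1) (E 0 0 - E 1 0) := by
    refine hdcomp _ _ ?_ ?_ <;> intro i j <;> fin_cases i <;> fin_cases j <;>
      simp [hE, Matrix.mul_apply, Fin.sum_univ_two, Matrix.single,
        Matrix.conjTranspose_apply]
  have d4 : MDisjoint (E 0 0 + E 0 1 + E 1 0 + E 1 1) (E 0 0 - E 0 1 - E 1 0 + E 1 1) := by
    refine hdcomp _ _ ?_ ?_ <;> intro i j <;> fin_cases i <;> fin_cases j <;>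
      simp [hE, Matrix.mul_apply, Fin.sum_univ_two, Matrix.single,
        Matrix.conjTranspose_apply]
  -- the difference Z
  set Z : Matrix (Fin r) (Fin s) ℂ := Φ (E 0 1) - F (E 0 1) with hZ
  clear_value Z
  -- step 1 : Zᴴ * F (E 1 0) = 0
  have s1 : Zᴴ * F (E 1 0) = 0 := by
    have hφ : (Φ (E 0 1))ᴴ * F (E 1 0) = 0 := by
      have := (hdisj _ _ d1).1
      rwa [h10] at this
    have hf : (F (E 0 1))ᴴ * F (E 1 0) = 0 := Fdisj _ _ d1
    rw [hZ, Matrix.conjTranspose_sub, Matrix.sub_mul, hφ, hf, sub_zero]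
  -- step 2 : Zᴴ * F (E 1 1) = 0
  have s2 : Zᴴ * F (E 1 1) = 0 := by
    have hφ : (F (E 0 0 + E 0 1) + Z)ᴴ * F (E 1 0 - E 1 1) = 0 := by
      have h := (hdisj _ _ d2).1
      rw [map_add, map_sub, h00, h10, h11] at h
      have : F (E 0 0) + Φ (E 0 1) = F (E 0 0 + E 0 1) + Z := by
        rw [Fadd, hZ]; abel
      rw [this] at h
      rw [← h, Fsub]
    have hf : (F (E 0 0 + E 0 1))ᴴ * F (E 1 0 - E 1 1) = 0 := Fdisj _ _ d2
    have hz : Zᴴ * F (E 1 0 - E 1 1) = 0 := by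
      rw [Matrix.conjTranspose_add, Matrix.add_mul, hf, zero_add] at hφ
      exact hφ
    rw [Fsub, Matrix.mul_sub, s1, zero_sub, neg_eq_zero] at hz
    exact hz
  -- step 3 : Zᴴ * F (E 0 0) = 0
  have s3 : Zᴴ * F (E 0 0) = 0 := by
    have hφ : (F (E 0 1 + E 1 1) + Z)ᴴ * F (E 0 0 - E 1 0) = 0 := by
      have h := (hdisj _ _ d3).1
      rw [map_add, map_sub, h00, h10, h11] at h
      have : Φ (E 0 1) + F (E 1 1) = F (E 0 1 + E 1 1) + Z := by
        rw [Fadd, hZ]; abel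
      rw [this] at h
      rw [← h, Fsub]
    have hf : (F (E 0 1 + E 1 1))ᴴ * F (E 0 0 - E 1 0) = 0 := Fdisj _ _ d3
    have hz : Zᴴ * F (E 0 0 - E 1 0) = 0 := by
      rw [Matrix.conjTranspose_add, Matrix.add_mul, hf, zero_add] at hφ
      exact hφ
    rw [Fsub, Matrix.mul_sub, s1, sub_zero] at hz
    exact hz
  -- step 4 : Zᴴ * F 1 = 0
  have hone : (1 : Matrix (Fin 2) (Fin 2) ℂ) = E 0 0 + E 1 1 := by
    ext i j
    fin_cases i <;> fin_cases j <;>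
      simp [hE, Matrix.single, Matrix.one_apply]
  have s4 : Zᴴ * F 1 = 0 := by
    rw [hone, Fadd, Matrix.mul_add, s3, s2, add_zero]
  -- step 5 : Zᴴ * F A = 0 for all A
  have s5 : ∀ A, Zᴴ * F A = 0 := by
    intro A
    rw [Ffac A, ← Matrix.mul_assoc, s4, Matrix.zero_mul]
  -- step 6 : the quadratic relation forces Z = 0
  have hΦA : Φ (E 0 0 + E 0 1 + E 1 0 + E 1 1) = F (E 0 0 + E 0 1 + E 1 0 + E 1 1) + Z := by
    rw [map_add, map_add, map_add, h00, h10, h11, Fadd, Fadd, Fadd, hZ]; abel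
  have hΦB : Φ (E 0 0 - E 0 1 - E 1 0 + E 1 1) = F (E 0 0 - E 0 1 - E 1 0 + E 1 1) - Z := by
    rw [map_add, map_sub, map_sub, h00, h10, h11, Fadd, Fsub, Fsub, hZ]; abel
  have hq := (hdisj _ _ d4).1
  rw [hΦA, hΦB] at hq
  have hfa : (F (E 0 0 + E 0 1 + E 1 0 + E 1 1))ᴴ * F (E 0 0 - E 0 1 - E 1 0 + E 1 1) = 0 :=
    Fdisj _ _ d4
  have hza : Zᴴ * F (E 0 0 - E 0 1 - E 1 0 + E 1 1) = 0 := s5 _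
  have hfz : (F (E 0 0 + E 0 1 + E 1 0 + E 1 1))ᴴ * Z = 0 := by
    have := congrArg Matrix.conjTranspose (s5 (E 0 0 + E 0 1 + E 1 0 + E 1 1))
    simpa [Matrix.conjTranspose_mul] using this
  have expand : (F (E 0 0 + E 0 1 + E 1 0 + E 1 1) + Z)ᴴ *
        (F (E 0 0 - E 0 1 - E 1 0 + E 1 1) - Z)
      = (F (E 0 0 + E 0 1 + E 1 0 + E 1 1))ᴴ * F (E 0 0 - E 0 1 - E 1 0 + E 1 1)
        - (F (E 0 0 + E 0 1 + E 1 0 + E 1 1))ᴴ * Z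
        + (Zᴴ * F (E 0 0 - E 0 1 - E 1 0 + E 1 1) - Zᴴ * Z) := by
    rw [Matrix.conjTranspose_add, Matrix.add_mul, Matrix.mul_sub, Matrix.mul_sub]
  rw [expand, hfa, hza, hfz] at hq
  have hZZ : Zᴴ * Z = 0 := by
    have h' : -(Zᴴ * Z) = 0 := by simpa using hq
    exact neg_eq_zero.mp h' 
  have hZ0 : Z = 0 := conjT_mul_self_zero Z hZZ
  rw [hZ] at hZ0
  have hfin := sub_eq_zero.mp hZ0
  simpa [hE, hFdef] using hfin

end Paper
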